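/- For any earlier time t' < t, suppose Var(τ̂_t^{TE}) > Cov(τ̂_t^{TE}, τ̂_{t'}^{TE}). Then there exists α ∈ (0,1) such that τ̂_t^c = α τ̂_t^{TE} + (1 − α) τ̂_{t'}^{TE} has mean squared error for τ_t^{TE} strictly lower than Var(τ̂_t^{TE}). Moreover, if in addition Var(τ̂_t^{TE}) − Var(τ̂_{t'}^{TE}) > 4(t − t')²ε², then α = 1/2 yields MSE(τ̂_t^c) < Var(τ̂_t^{TE}). -/

import Mathlib

open MeasureTheory ProbabilityTheory Filter
open scoped ProbabilityTheory

/-- Horvitz–Thompson estimator of the total effect, based on the exposures `h1 i`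
(everybody treated) and `h0 i` (everybody in control). -/
noncomputable def htTE {Ω Δ : Type*} [MeasureSpace Ω] [DecidableEq Δ] {n : ℕ}
    (H : Fin n → Ω → Δ) (Y : Fin n → Δ → ℝ) (h1 h0 : Fin n → Δ) (ω : Ω) : ℝ :=
  (n : ℝ)⁻¹ * ∑ i : Fin n,
    ((if H i ω = h1 i then Y i (h1 i) / (ℙ {ω' | H i ω' = h1 i}).toReal else 0)
      - (if H i ω = h0 i then Y i (h0 i) / (ℙ {ω' | H i ω' = h0 i}).toReal else 0))

/-- The total effect `τ_t^{TE}`. -/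
noncomputable def totalEffect {Δ : Type*} {n : ℕ}
    (Y : Fin n → Δ → ℝ) (h1 h0 : Fin n → Δ) : ℝ :=
  (n : ℝ)⁻¹ * ∑ i : Fin n, (Y i (h1 i) - Y i (h0 i))

/-- Covariance of two real random variables. -/
noncomputable def cov {Ω : Type*} [MeasureSpace Ω] (X Z : Ω → ℝ) : ℝ :=
  ∫ ω, (X ω - ∫ x, X x) * (Z ω - ∫ x, Z x)

/- ## Auxiliary lemmas -/

lemma memℒp_of_bound' {Ω : Type*} [MeasureSpace Ω] [IsFiniteMeasure (ℙ : Measure Ω)]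
    {f : Ω → ℝ} (hf : Measurable f) (C : ℝ) (h : ∀ ω, |f ω| ≤ C) (p : ENNReal) :
    MemLp f p ℙ :=
  (memLp_top_of_bound hf.aestronglyMeasurable C
    (Filter.Eventually.of_forall (by simpa [Real.norm_eq_abs] using h))).mono_exponent
    le_top

lemma htTE_measurable' {Ω Δ : Type*} [MeasureSpace Ω] [DecidableEq Δ] [MeasurableSpace Δ]
    [MeasurableSingletonClass Δ] {n : ℕ}
    (H : Fin n → Ω → Δ) (hm : ∀ i, Measurable (H i)) (Y : Fin n → Δ → ℝ) (h1 h0 : Fin n → Δ) :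
    Measurable (htTE H Y h1 h0) := by
  unfold htTE
  refine Measurable.const_mul ?_ _
  refine Finset.measurable_sum _ fun i _ => ?_
  have m1 : MeasurableSet {ω | H i ω = h1 i} := hm i (measurableSet_singleton (h1 i))
  have m0 : MeasurableSet {ω | H i ω = h0 i} := hm i (measurableSet_singleton (h0 i))
  exact (Measurable.ite m1 measurable_const measurable_const).sub
    (Measurable.ite m0 measurable_const measurable_const)

lemma htTE_bdd' {Ω Δ : Type*} [MeasureSpace Ω] [DecidableEq Δ] {n : ℕ}
    (H : Fin n → Ω → Δ) (Y : Fin n → Δ → ℝ) (h1 h0 : Fin n → Δ) :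
    ∃ C : ℝ, 0 ≤ C ∧ ∀ ω, |htTE H Y h1 h0 ω| ≤ C := by
  refine ⟨(n:ℝ)⁻¹ * ∑ i : Fin n, (|Y i (h1 i) / (ℙ {ω' | H i ω' = h1 i}).toReal|
      + |Y i (h0 i) / (ℙ {ω' | H i ω' = h0 i}).toReal|), by positivity, fun ω => ?_⟩
  unfold htTE
  rw [abs_mul, abs_of_nonneg (by positivity : (0:ℝ) ≤ (n:ℝ)⁻¹)]
  refine mul_le_mul_of_nonneg_left ?_ (by positivity)
  refine (Finset.abs_sum_le_sum_abs _ _).trans (Finset.sum_le_sum fun i _ => ?_)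
  refine (abs_sub _ _).trans (add_le_add ?_ ?_) <;>
    · split_ifs <;> simp [abs_nonneg]

lemma sq_expand' {Ω : Type*} [MeasureSpace Ω] [IsProbabilityMeasure (ℙ : Measure Ω)]
    {X Z : Ω → ℝ} (iX : Integrable X ℙ) (iZ : Integrable Z ℙ)
    (iX2 : Integrable (fun ω => X ω ^ 2) ℙ) (iZ2 : Integrable (fun ω => Z ω ^ 2) ℙ)
    (iXZ : Integrable (fun ω => X ω * Z ω) ℙ) (a b c : ℝ) :
    ∫ ω, (a * X ω + b * Z ω + c) ^ 2
      = a^2 * (∫ ω, X ω^2) + b^2 * (∫ ω, Z ω^2) + c^2 + 2*a*b * (∫ ω, X ω * Z ω)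
        + 2*a*c * (∫ ω, X ω) + 2*b*c * (∫ ω, Z ω) := by
  have h : (fun ω => (a * X ω + b * Z ω + c)^2)
      = fun ω => a^2 * X ω^2 + (b^2 * Z ω^2 + (2*a*b * (X ω * Z ω)
          + (2*a*c * X ω + (2*b*c * Z ω + c^2)))) := by funext ω; ring
  have i6 : Integrable (fun _ : Ω => c^2) ℙ := integrable_const _
  have i5 : Integrable (fun ω => 2*b*c * Z ω) ℙ := iZ.const_mul _
  have i4 : Integrable (fun ω => 2*a*c * X ω) ℙ := iX.const_mul _
  have i3 : Integrable (fun ω => 2*a*b * (X ω * Z ω)) ℙ := iXZ.const_mul _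
  have i2 : Integrable (fun ω => b^2 * Z ω^2) ℙ := iZ2.const_mul _
  have i56 : Integrable (fun ω => 2*b*c * Z ω + c^2) ℙ := i5.add i6
  have i456 : Integrable (fun ω => 2*a*c * X ω + (2*b*c * Z ω + c^2)) ℙ := i4.add i56
  have i3456 : Integrable (fun ω => 2*a*b * (X ω * Z ω) + (2*a*c * X ω + (2*b*c * Z ω + c^2))) ℙ :=
    i3.add i456
  have i23456 : Integrable (fun ω => b^2 * Z ω^2 + (2*a*b * (X ω * Z ω)
      + (2*a*c * X ω + (2*b*c * Z ω + c^2)))) ℙ := i2.add i3456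
  have e1 : ∫ ω, (a^2 * X ω^2 + (b^2 * Z ω^2 + (2*a*b * (X ω * Z ω)
        + (2*a*c * X ω + (2*b*c * Z ω + c^2)))))
      = (∫ ω, a^2 * X ω^2) + ∫ ω, (b^2 * Z ω^2 + (2*a*b * (X ω * Z ω)
        + (2*a*c * X ω + (2*b*c * Z ω + c^2)))) := integral_add (iX2.const_mul _) i23456
  have e2 : ∫ ω, (b^2 * Z ω^2 + (2*a*b * (X ω * Z ω) + (2*a*c * X ω + (2*b*c * Z ω + c^2))))
      = (∫ ω, b^2 * Z ω^2) + ∫ ω, (2*a*b * (X ω * Z ω) + (2*a*c * X ω + (2*b*c * Z ω + c^2))) :=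
    integral_add i2 i3456
  have e3 : ∫ ω, (2*a*b * (X ω * Z ω) + (2*a*c * X ω + (2*b*c * Z ω + c^2)))
      = (∫ ω, 2*a*b * (X ω * Z ω)) + ∫ ω, (2*a*c * X ω + (2*b*c * Z ω + c^2)) :=
    integral_add i3 i456
  have e4 : ∫ ω, (2*a*c * X ω + (2*b*c * Z ω + c^2))
      = (∫ ω, 2*a*c * X ω) + ∫ ω, (2*b*c * Z ω + c^2) := integral_add i4 i56
  have e5 : ∫ ω, (2*b*c * Z ω + c^2) = (∫ ω, 2*b*c * Z ω) + ∫ ω, (fun _ : Ω => c^2) ω :=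
    integral_add i5 i6
  rw [h, e1, e2, e3, e4, e5, integral_const_mul, integral_const_mul, integral_const_mul,
    integral_const_mul, integral_const_mul, integral_const]
  simp [measure_univ]
  ring

lemma cov_eq' {Ω : Type*} [MeasureSpace Ω] [IsProbabilityMeasure (ℙ : Measure Ω)]
    {X Z : Ω → ℝ} (iX : Integrable X ℙ) (iZ : Integrable Z ℙ)
    (iXZ : Integrable (fun ω => X ω * Z ω) ℙ) :
    cov X Z = (∫ ω, X ω * Z ω) - (∫ ω, X ω) * (∫ ω, Z ω) := by
  unfold cov
  have h : (fun ω => (X ω - ∫ x, X x) * (Z ω - ∫ x, Z x))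
      = fun ω => (X ω * Z ω) + ((-(∫ x, Z x)) * X ω + ((-(∫ x, X x)) * Z ω
          + (∫ x, X x) * (∫ x, Z x))) := by funext ω; ring
  have i4 : Integrable (fun _ : Ω => (∫ x, X x) * (∫ x, Z x)) ℙ := integrable_const _
  have i3 : Integrable (fun ω => (-(∫ x, X x)) * Z ω) ℙ := iZ.const_mul _
  have i2 : Integrable (fun ω => (-(∫ x, Z x)) * X ω) ℙ := iX.const_mul _
  have i34 : Integrable (fun ω => (-(∫ x, X x)) * Z ω + (∫ x, X x) * (∫ x, Z x)) ℙ := i3.add i4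
  have i234 : Integrable (fun ω => (-(∫ x, Z x)) * X ω + ((-(∫ x, X x)) * Z ω
      + (∫ x, X x) * (∫ x, Z x))) ℙ := i2.add i34
  have e1 : ∫ ω, (X ω * Z ω + ((-(∫ x, Z x)) * X ω + ((-(∫ x, X x)) * Z ω
        + (∫ x, X x) * (∫ x, Z x))))
      = (∫ ω, X ω * Z ω) + ∫ ω, ((-(∫ x, Z x)) * X ω + ((-(∫ x, X x)) * Z ω
        + (∫ x, X x) * (∫ x, Z x))) := integral_add iXZ i234
  have e2 : ∫ ω, ((-(∫ x, Z x)) * X ω + ((-(∫ x, X x)) * Z ω + (∫ x, X x) * (∫ x, Z x)))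
      = (∫ ω, (-(∫ x, Z x)) * X ω) + ∫ ω, ((-(∫ x, X x)) * Z ω + (∫ x, X x) * (∫ x, Z x)) :=
    integral_add i2 i34
  have e3 : ∫ ω, ((-(∫ x, X x)) * Z ω + (∫ x, X x) * (∫ x, Z x))
      = (∫ ω, (-(∫ x, X x)) * Z ω) + ∫ ω, (fun _ : Ω => (∫ x, X x) * (∫ x, Z x)) ω :=
    integral_add i3 i4
  rw [h, e1, e2, e3, integral_const_mul, integral_const_mul, integral_const]
  simp [measure_univ]
  ring

lemma algHelper' (A D : ℝ) (hA : 0 ≤ A) (hD : 0 < D) :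
    ∃ δ : ℝ, 0 < δ ∧ δ ≤ 1/2 ∧ δ^2 * A - δ * (2*D) < 0 := by
  have hAD : 0 < A + 2*D := by linarith
  refine ⟨D / (A + 2*D), div_pos hD hAD, ?_, ?_⟩
  · rw [div_le_iff₀ hAD]; linarith
  · have heq : D / (A + 2*D) * (A + 2*D) = D := div_mul_cancel₀ _ hAD.ne'
    have hδ : 0 < D / (A+2*D) := div_pos hD hAD
    have h2 := congrArg (fun x => D / (A+2*D) * x) heq
    nlinarith [h2, mul_pos hδ hD, mul_pos hδ (mul_pos hδ hD)]

set_option maxHeartbeats 1000000 in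
/-- for any earlier time `t' < t`, if `Var(τ̂_t) > Cov(τ̂_t, τ̂_{t'})`
then some convex combination of `τ̂_t` and `τ̂_{t'}` strictly reduces the mean squared
error; if moreover `Var(τ̂_t) − Var(τ̂_{t'}) > 4(t − t')²ε²`, the weight `α = 1/2`
suffices. -/
theorem stmt14 {Ω Δ : Type*} [MeasureSpace Ω] [IsProbabilityMeasure (ℙ : Measure Ω)]
    [Fintype Δ] [DecidableEq Δ] [MeasurableSpace Δ] [MeasurableSingletonClass Δ]
    {n T : ℕ}
    (H : ℕ → Fin n → Ω → Δ) (hmeas : ∀ (t : ℕ) (i : Fin n), Measurable (H t i))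
    (Y : ℕ → Fin n → Δ → ℝ) (h1 h0 : Fin n → Δ)
    -- exposure probabilities are positive
    (hpos : ∀ (t : ℕ), t < T → ∀ i : Fin n,
      0 < (ℙ {ω | H t i ω = h1 i}).toReal ∧ 0 < (ℙ {ω | H t i ω = h0 i}).toReal)
    -- ε-weak stability of the potential outcomes
    (ε : ℝ)
    (hstab : ∀ t : ℕ, t + 1 < T → ∀ (i : Fin n) (a : Δ), |Y t i a - Y (t + 1) i a| ≤ ε)
    -- the Horvitz–Thompson estimators are unbiased
    (hunbiased : ∀ t : ℕ, t < T →
      ∫ ω, htTE (H t) (Y t) h1 h0 ω = totalEffect (Y t) h1 h0)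
    (t t' : ℕ) (htt' : t' < t) (htT : t < T)
    -- Var(τ̂_t) > Cov(τ̂_t, τ̂_{t'})
    (hVC : cov (htTE (H t) (Y t) h1 h0) (htTE (H t') (Y t') h1 h0)
      < variance (htTE (H t) (Y t) h1 h0) ℙ) :
    -- (a) some convex weight gives mean squared error strictly below Var(τ̂_t)
    (∃ α ∈ Set.Ioo (0 : ℝ) 1,
      ∫ ω, ((α * htTE (H t) (Y t) h1 h0 ω
              + (1 - α) * htTE (H t') (Y t') h1 h0 ω)
            - totalEffect (Y t) h1 h0) ^ 2
        < variance (htTE (H t) (Y t) h1 h0) ℙ) ∧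
    -- (b) under the stronger variance gap, α = 1/2 works
    (4 * ((t : ℝ) - (t' : ℝ)) ^ 2 * ε ^ 2
        < variance (htTE (H t) (Y t) h1 h0) ℙ
          - variance (htTE (H t') (Y t') h1 h0) ℙ →
      ∫ ω, (((1 : ℝ) / 2 * htTE (H t) (Y t) h1 h0 ω
              + (1 : ℝ) / 2 * htTE (H t') (Y t') h1 h0 ω)
            - totalEffect (Y t) h1 h0) ^ 2
        < variance (htTE (H t) (Y t) h1 h0) ℙ) := by
  have htT' : t' < T := htt'.trans htT
  set X := htTE (H t) (Y t) h1 h0 with hXdef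
  set Z := htTE (H t') (Y t') h1 h0 with hZdef
  have mXmeas : Measurable X := htTE_measurable' _ (hmeas t) _ _ _
  have mZmeas : Measurable Z := htTE_measurable' _ (hmeas t') _ _ _
  obtain ⟨Cx, hCx0, hCx⟩ := htTE_bdd' (H t) (Y t) h1 h0
  obtain ⟨Cz, hCz0, hCz⟩ := htTE_bdd' (H t') (Y t') h1 h0
  have memX : MemLp X 2 ℙ := memℒp_of_bound' mXmeas Cx hCx 2
  have memZ : MemLp Z 2 ℙ := memℒp_of_bound' mZmeas Cz hCz 2
  have iX : Integrable X ℙ := memX.integrable one_le_two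
  have iZ : Integrable Z ℙ := memZ.integrable one_le_two
  have iX2 : Integrable (fun ω => X ω ^ 2) ℙ := memX.integrable_sq
  have iZ2 : Integrable (fun ω => Z ω ^ 2) ℙ := memZ.integrable_sq
  have iXZ : Integrable (fun ω => X ω * Z ω) ℙ := by
    refine memLp_one_iff_integrable.mp
      (memℒp_of_bound' (mXmeas.mul mZmeas) (Cx * Cz) (fun ω => ?_) 1)
    rw [Pi.mul_apply, abs_mul]
    exact mul_le_mul (hCx ω) (hCz ω) (abs_nonneg _) hCx0
  have hexp := sq_expand' iX iZ iX2 iZ2 iXZ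
  have hVarX : variance X ℙ = (∫ ω, X ω^2) - (∫ ω, X ω)^2 := by
    rw [variance_eq_sub memX]; rfl
  have hVarZ : variance Z ℙ = (∫ ω, Z ω^2) - (∫ ω, Z ω)^2 := by
    rw [variance_eq_sub memZ]; rfl
  have hcov : cov X Z = (∫ ω, X ω * Z ω) - (∫ ω, X ω) * (∫ ω, Z ω) := cov_eq' iX iZ iXZ
  set mx := ∫ ω, X ω with hmxdef
  set mz := ∫ ω, Z ω with hmzdef
  set m2x := ∫ ω, X ω^2 with hm2xdef
  set m2z := ∫ ω, Z ω^2 with hm2zdef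
  set mxz := ∫ ω, X ω * Z ω with hmxzdef
  have hmx : mx = totalEffect (Y t) h1 h0 := hunbiased t htT
  have hmz : mz = totalEffect (Y t') h1 h0 := hunbiased t' htT'
  have hA : 0 ≤ m2x + m2z - 2*mxz := by
    have h0 : 0 ≤ ∫ ω, ((1:ℝ) * X ω + (-1) * Z ω + 0)^2 :=
      integral_nonneg fun ω => sq_nonneg _
    rw [hexp 1 (-1) 0] at h0
    nlinarith [h0]
  have hD : mxz - mx * mz < m2x - mx^2 := by
    rw [hcov, hVarX] at hVC
    exact hVC
  constructor
  · obtain ⟨δ, hδ0, hδh, hkey⟩ := algHelper' (m2x + m2z - 2*mxz)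
      ((m2x - mx^2) - (mxz - mx*mz)) hA (by linarith)
    refine ⟨1 - δ, ⟨by linarith, by linarith⟩, ?_⟩
    rw [hVarX, ← hmx]
    have h1' : ∫ ω, (((1-δ) * X ω + (1 - (1-δ)) * Z ω) - mx)^2
        = ∫ ω, ((1-δ) * X ω + (1-(1-δ)) * Z ω + (-mx))^2 :=
      integral_congr_ae (Filter.Eventually.of_forall fun ω => by ring)
    rw [h1', hexp]
    nlinarith [hkey]
  · intro hyp
    rw [hVarX, hVarZ] at hyp
    have hb : (mz - mx)^2 ≤ 4 * ((t:ℝ) - (t':ℝ))^2 * ε^2 := by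
      rw [hmz, hmx]
      rcases Nat.eq_zero_or_pos n with hn | hn
      · subst hn
        simp only [totalEffect, Finset.univ_eq_empty, Finset.sum_empty, mul_zero, sub_zero,
          ne_eq, OfNat.ofNat_ne_zero, not_false_eq_true, zero_pow]
        positivity
      · have hk : ∀ k : ℕ, t' + k ≤ t → ∀ (i : Fin n) (a : Δ),
            |Y t' i a - Y (t' + k) i a| ≤ (k:ℝ) * ε := by
          intro k
          induction k with
          | zero => intro _ i a; simp
          | succ k ih =>
            intro hle i a
            have hprev := ih (by omega) i a
            have hst := hstab (t' + k) (by omega) i a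
            have h3 : |Y t' i a - Y (t' + (k+1)) i a|
                ≤ |Y t' i a - Y (t' + k) i a| + |Y (t' + k) i a - Y (t' + k + 1) i a| := by
              have hrw : t' + (k+1) = t' + k + 1 := by omega
              rw [hrw]
              exact abs_sub_le _ _ _
            have : |Y t' i a - Y (t' + (k+1)) i a| ≤ (k:ℝ)*ε + ε :=
              h3.trans (add_le_add hprev hst)
            push_cast
            linarith
        have hpt : ∀ (i : Fin n) (a : Δ), |Y t' i a - Y t i a| ≤ ((t:ℝ) - (t':ℝ)) * ε := by
          intro i a
          have h4 := hk (t - t') (by omega) i a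
          rw [Nat.add_sub_cancel' htt'.le] at h4
          have hc : ((t - t' : ℕ):ℝ) = (t:ℝ) - (t':ℝ) := by
            rw [Nat.cast_sub htt'.le]
          rwa [hc] at h4
        have hsum : |∑ i : Fin n,
              ((Y t' i (h1 i) - Y t' i (h0 i)) - (Y t i (h1 i) - Y t i (h0 i)))|
            ≤ (n:ℝ) * (2 * (((t:ℝ)-(t':ℝ)) * ε)) := by
          refine (Finset.abs_sum_le_sum_abs _ _).trans ?_
          calc ∑ i : Fin n, |(Y t' i (h1 i) - Y t' i (h0 i)) - (Y t i (h1 i) - Y t i (h0 i))|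
              ≤ ∑ _i : Fin n, (2 * (((t:ℝ)-(t':ℝ)) * ε)) := by
                refine Finset.sum_le_sum fun i _ => ?_
                have e : (Y t' i (h1 i) - Y t' i (h0 i)) - (Y t i (h1 i) - Y t i (h0 i))
                    = (Y t' i (h1 i) - Y t i (h1 i)) - (Y t' i (h0 i) - Y t i (h0 i)) := by ring
                rw [e]
                have hb1 := hpt i (h1 i)
                have hb0 := hpt i (h0 i)
                refine (abs_sub _ _).trans ?_
                linarith
            _ = (n:ℝ) * (2 * (((t:ℝ)-(t':ℝ)) * ε)) := by
                rw [Finset.sum_const, Finset.card_univ, Fintype.card_fin, nsmul_eq_mul]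
        have habs : |totalEffect (Y t') h1 h0 - totalEffect (Y t) h1 h0|
            ≤ 2 * (((t:ℝ)-(t':ℝ)) * ε) := by
          unfold totalEffect
          rw [← mul_sub, ← Finset.sum_sub_distrib, abs_mul,
            abs_of_nonneg (by positivity : (0:ℝ) ≤ (n:ℝ)⁻¹)]
          calc (n:ℝ)⁻¹ * |∑ i : Fin n,
                ((Y t' i (h1 i) - Y t' i (h0 i)) - (Y t i (h1 i) - Y t i (h0 i)))|
              ≤ (n:ℝ)⁻¹ * ((n:ℝ) * (2 * (((t:ℝ)-(t':ℝ)) * ε))) :=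
                mul_le_mul_of_nonneg_left hsum (by positivity)
            _ = 2 * (((t:ℝ)-(t':ℝ)) * ε) := by
                rw [← mul_assoc, inv_mul_cancel₀
                  (by exact_mod_cast hn.ne' : (n:ℝ) ≠ 0), one_mul]
        nlinarith [mul_self_le_mul_self
            (abs_nonneg (totalEffect (Y t') h1 h0 - totalEffect (Y t) h1 h0)) habs,
          sq_abs (totalEffect (Y t') h1 h0 - totalEffect (Y t) h1 h0)]
    rw [hVarX, ← hmx]
    have h1' : ∫ ω, (((1:ℝ)/2 * X ω + (1:ℝ)/2 * Z ω) - mx)^2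
        = ∫ ω, ((1:ℝ)/2 * X ω + (1:ℝ)/2 * Z ω + (-mx))^2 :=
      integral_congr_ae (Filter.Eventually.of_forall fun ω => by ring)
    rw [h1', hexp]
    nlinarith [hb, hyp, hD]
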